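/- Let φ: X → G be an injective (a,b)-rough isometry from a bounded-degree graph X to a Cayley graph (G,S) of a group of polynomial volume growth. Then there exist constants C₁ < 1, C₂ > 0 and R₁ such that for all y ∈ G, p ∈ X with d^S(φ(p), y) ≤ b and all R ≥ R₁: |B_p^X(R)| ≥ C₂·|B_y^G(C₁·R)|. In fact one may take C₁ = 1/(2a) and R₁ = 6ab. -/

import Mathlib

def IsRoughIsometryWith {X Y : Type*} (dX : X → X → ℝ) (dY : Y → Y → ℝ)
    (a b : ℝ) (φ : X → Y) : Prop :=
  (∀ x y : X, a⁻¹ * dX x y - b ≤ dY (φ x) (φ y) ∧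
      dY (φ x) (φ y) ≤ a * dX x y + b) ∧
  ∀ z : Y, ∃ x : X, dY z (φ x) ≤ b

noncomputable def wordDist {G : Type*} [Group G] (S : Set G) (x y : G) : ℕ :=
  sInf {n | ∃ l : List G, l.length = n ∧ (∀ g ∈ l, g ∈ S) ∧ x * l.prod = y}

noncomputable def growth {G : Type*} [Group G] (S : Set G) (n : ℕ) : ℕ :=
  {x : G | wordDist S 1 x ≤ n}.ncard

section Aux

variable {G : Type*} [Group G] {S : Set G}

lemma exists_word (hSsym : ∀ s ∈ S, s⁻¹ ∈ S) (hSgen : Subgroup.closure S = ⊤)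
    (x y : G) : ∃ l : List G, (∀ g ∈ l, g ∈ S) ∧ x * l.prod = y := by
  have h : x⁻¹ * y ∈ (Subgroup.closure S).toSubmonoid := by rw [hSgen]; trivial
  rw [Subgroup.closure_toSubmonoid] at h
  obtain ⟨l, hl, hp⟩ := Submonoid.exists_list_of_mem_closure h
  refine ⟨l, fun g hg => ?_, by rw [hp]; group⟩
  rcases hl g hg with h | h
  · exact h
  · have := hSsym g⁻¹ (Set.mem_inv.mp h)
    simpa using this

lemma wordDist_le (x y : G) {l : List G} (hl : ∀ g ∈ l, g ∈ S) (hp : x * l.prod = y) :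
    wordDist S x y ≤ l.length := Nat.sInf_le ⟨l, rfl, hl, hp⟩

lemma exists_list_wordDist (hSsym : ∀ s ∈ S, s⁻¹ ∈ S) (hSgen : Subgroup.closure S = ⊤)
    (x y : G) : ∃ l : List G, l.length = wordDist S x y ∧ (∀ g ∈ l, g ∈ S) ∧
      x * l.prod = y := by
  obtain ⟨l, hl, hp⟩ := exists_word hSsym hSgen x y
  have hne : {n | ∃ l : List G, l.length = n ∧ (∀ g ∈ l, g ∈ S) ∧ x * l.prod = y}.Nonempty :=
    ⟨l.length, l, rfl, hl, hp⟩
  exact Nat.sInf_mem hne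

lemma wordDist_triangle (hSsym : ∀ s ∈ S, s⁻¹ ∈ S) (hSgen : Subgroup.closure S = ⊤)
    (x y z : G) : wordDist S x z ≤ wordDist S x y + wordDist S y z := by
  obtain ⟨l1, h1, h1S, h1p⟩ := exists_list_wordDist hSsym hSgen x y
  obtain ⟨l2, h2, h2S, h2p⟩ := exists_list_wordDist hSsym hSgen y z
  have hle := wordDist_le (S := S) x z (l := l1 ++ l2) ?_ ?_
  · simpa [h1, h2] using hle
  · intro g hg
    rcases List.mem_append.mp hg with h | h
    exacts [h1S g h, h2S g h]
  · rw [List.prod_append, ← mul_assoc, h1p, h2p]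

lemma wordDist_symm (hSsym : ∀ s ∈ S, s⁻¹ ∈ S) (hSgen : Subgroup.closure S = ⊤)
    (x y : G) : wordDist S x y = wordDist S y x := by
  have key : ∀ u v : G, wordDist S u v ≤ wordDist S v u := by
    intro u v
    obtain ⟨l, hlen, hS, hp⟩ := exists_list_wordDist hSsym hSgen v u
    have hle := wordDist_le (S := S) u v (l := (l.map fun g => g⁻¹).reverse) ?_ ?_
    · simpa [hlen] using hle
    · intro g hg
      simp only [List.mem_reverse, List.mem_map] at hg
      obtain ⟨s, hs, rfl⟩ := hg
      exact hSsym s (hS s hs)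
    · rw [← List.prod_inv_reverse, ← hp]; group
  exact le_antisymm (key x y) (key y x)

lemma wordDist_mul_left (g x y : G) : wordDist S (g * x) (g * y) = wordDist S x y := by
  unfold wordDist
  congr 1
  ext n
  constructor
  · rintro ⟨l, h1, h2, h3⟩
    refine ⟨l, h1, h2, ?_⟩
    rw [mul_assoc] at h3
    exact mul_left_cancel h3
  · rintro ⟨l, h1, h2, h3⟩
    exact ⟨l, h1, h2, by rw [mul_assoc, h3]⟩

lemma lists_finite (hSfin : S.Finite) (n : ℕ) :
    {l : List G | (∀ g ∈ l, g ∈ S) ∧ l.length ≤ n}.Finite := by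
  haveI : Finite S := hSfin.to_subtype
  refine ((List.finite_length_le S n).image (List.map Subtype.val)).subset ?_
  rintro l ⟨hS, hlen⟩
  refine ⟨l.pmap (fun g hg => (⟨g, hg⟩ : S)) hS, by simpa using hlen, ?_⟩
  simp [List.map_pmap]

lemma ball_finite (hSfin : S.Finite) (hSsym : ∀ s ∈ S, s⁻¹ ∈ S)
    (hSgen : Subgroup.closure S = ⊤) (x : G) (n : ℕ) :
    {z : G | wordDist S x z ≤ n}.Finite := by
  refine ((lists_finite hSfin n).image (fun l => x * l.prod)).subset ?_
  intro z hz
  simp only [Set.mem_setOf_eq] at hz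
  obtain ⟨l, hlen, hS, hp⟩ := exists_list_wordDist hSsym hSgen x z
  exact ⟨l, ⟨hS, by omega⟩, hp⟩

lemma left_ball_eq (hSsym : ∀ s ∈ S, s⁻¹ ∈ S) (hSgen : Subgroup.closure S = ⊤)
    (w : G) (n : ℕ) :
    {z : G | wordDist S z w ≤ n} = (fun g => w * g) '' {g : G | wordDist S 1 g ≤ n} := by
  ext z
  simp only [Set.mem_image, Set.mem_setOf_eq]
  constructor
  · intro h
    refine ⟨w⁻¹ * z, ?_, by group⟩
    have h1 : wordDist S (w⁻¹ * w) (w⁻¹ * z) = wordDist S w z := wordDist_mul_left w⁻¹ w z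
    rw [inv_mul_cancel] at h1
    rw [h1, ← wordDist_symm hSsym hSgen]
    exact h
  · rintro ⟨g, hg, rfl⟩
    rw [wordDist_symm hSsym hSgen]
    have h1 : wordDist S (w * 1) (w * g) = wordDist S 1 g := wordDist_mul_left w 1 g
    rw [mul_one] at h1
    rw [h1]
    exact hg

end Aux

theorem volume_comparison_along_rough_isometry {V G : Type*} [Group G]
    (X : SimpleGraph V) (hconn : X.Connected) (Δ : ℕ) (hΔ : 2 ≤ Δ)
    (hdeg : ∀ v : V, (X.neighborSet v).ncard ≤ Δ)
    (S : Set G) (hSfin : S.Finite) (hSsym : ∀ s ∈ S, s⁻¹ ∈ S)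
    (hSgen : Subgroup.closure S = ⊤)
    (D : ℕ) (c₁ c₂ : ℝ) (hc₁ : 0 < c₁) (hc₂ : 0 < c₂)
    (hpoly : ∀ n : ℕ, 1 ≤ n →
      c₁ * (n : ℝ) ^ D ≤ (growth S n : ℝ) ∧ (growth S n : ℝ) ≤ c₂ * (n : ℝ) ^ D)
    (a b : ℝ) (ha : 1 ≤ a) (hb : 0 ≤ b) (φ : V → G) (hinj : Function.Injective φ)
    (hφ : IsRoughIsometryWith (fun x y => (X.dist x y : ℝ))
      (fun x y => (wordDist S x y : ℝ)) a b φ) :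
    ∃ C₂ : ℝ, 0 < C₂ ∧ ∀ (y : G) (p : V), (wordDist S (φ p) y : ℝ) ≤ b →
      ∀ R : ℝ, 6 * a * b ≤ R →
      C₂ * ({z : G | (wordDist S y z : ℝ) ≤ (1 / (2 * a)) * R}.ncard : ℝ) ≤
        ({x : V | (X.dist p x : ℝ) ≤ R}.ncard : ℝ) := by
  classical
  obtain ⟨hbound, hdense⟩ := hφ
  have ha0 : (0:ℝ) < a := lt_of_lt_of_le one_pos ha
  set nb : ℕ := ⌈b⌉₊ with hnb
  have hubfin : {g : G | wordDist S 1 g ≤ nb}.Finite := ball_finite hSfin hSsym hSgen 1 nb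
  set K : ℕ := {g : G | wordDist S 1 g ≤ nb}.ncard with hK
  have hK0 : 0 < K := by
    rw [hK, Set.ncard_pos hubfin]
    refine ⟨1, ?_⟩
    have h0 : wordDist S 1 1 = 0 := Nat.le_zero.mp (by
      simpa using wordDist_le (S := S) 1 1 (l := []) (by simp) (by simp))
    simp only [Set.mem_setOf_eq, h0]
    omega
  have hK0' : (0:ℝ) < (K:ℝ) := by exact_mod_cast hK0
  refine ⟨(K:ℝ)⁻¹, by positivity, ?_⟩
  intro y p hpy R hR
  have hR0 : (0:ℝ) ≤ R := le_trans (by positivity) hR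
  set r : ℝ := (1 / (2 * a)) * R with hr
  have hr0 : 0 ≤ r := by positivity
  choose f hf using hdense
  set T := {z : G | (wordDist S y z : ℝ) ≤ r} with hT
  set B := {x : V | (X.dist p x : ℝ) ≤ R} with hB
  have hTfin : T.Finite := by
    refine (ball_finite hSfin hSsym hSgen y ⌈r⌉₊).subset ?_
    intro z hz
    simp only [Set.mem_setOf_eq] at hz ⊢
    exact_mod_cast le_trans hz (Nat.le_ceil r)
  have hBfin : B.Finite := by
    have himg : φ '' B ⊆ {g | wordDist S (φ p) g ≤ ⌈a * R + b⌉₊} := by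
      rintro _ ⟨x, hx, rfl⟩
      have hx' : (X.dist p x : ℝ) ≤ R := hx
      simp only [Set.mem_setOf_eq]
      have h2 := (hbound p x).2
      simp only at h2
      have hd0 : (0:ℝ) ≤ (X.dist p x : ℝ) := Nat.cast_nonneg _
      have : (wordDist S (φ p) (φ x) : ℝ) ≤ a * R + b := by
        nlinarith
      exact_mod_cast le_trans this (Nat.le_ceil _)
    exact Set.Finite.of_finite_image
      (((ball_finite hSfin hSsym hSgen (φ p) ⌈a * R + b⌉₊).subset himg)) hinj.injOn
  have hfB : ∀ z ∈ T, f z ∈ B := by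
    intro z hz
    simp only [hT, Set.mem_setOf_eq] at hz
    have hfz := hf z
    have t1 := wordDist_triangle hSsym hSgen (φ p) y (φ (f z))
    have t2 := wordDist_triangle hSsym hSgen y z (φ (f z))
    have h1 : (wordDist S (φ p) (φ (f z)) : ℝ) ≤ b + r + b := by
      push_cast
      have t1' : (wordDist S (φ p) (φ (f z)) : ℝ) ≤
          (wordDist S (φ p) y : ℝ) + (wordDist S y (φ (f z)) : ℝ) := by exact_mod_cast t1
      have t2' : (wordDist S y (φ (f z)) : ℝ) ≤
          (wordDist S y z : ℝ) + (wordDist S z (φ (f z)) : ℝ) := by exact_mod_cast t2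
      linarith
    have h2 := (hbound p (f z)).1
    simp only [hB, Set.mem_setOf_eq]
    have hdX : (X.dist p (f z) : ℝ) ≤ a * (b + r + b + b) := by
      have : a⁻¹ * (X.dist p (f z) : ℝ) ≤ b + r + b + b := by linarith
      have h3 := mul_le_mul_of_nonneg_left this (le_of_lt ha0)
      rw [← mul_assoc, mul_inv_cancel₀ (ne_of_gt ha0), one_mul] at h3
      exact h3
    have har : a * r = R / 2 := by
      rw [hr]; field_simp
    nlinarith
  set Tf := hTfin.toFinset with hTf
  set Bf := hBfin.toFinset with hBf
  have hcount : Tf.card ≤ K * (Tf.image f).card := by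
    apply Finset.card_le_mul_card_image
    intro x hx
    have hlbfin : {z : G | wordDist S z (φ x) ≤ nb}.Finite := by
      rw [left_ball_eq hSsym hSgen]
      exact hubfin.image _
    have hsub : (Tf.filter fun z => f z = x) ⊆ hlbfin.toFinset := by
      intro z hz
      simp only [Finset.mem_filter] at hz
      obtain ⟨hzT, hzx⟩ := hz
      have hfz := hf z
      rw [hzx] at hfz
      rw [Set.Finite.mem_toFinset]
      simp only [Set.mem_setOf_eq]
      have : (wordDist S z (φ x) : ℝ) ≤ (nb : ℝ) := le_trans hfz (Nat.le_ceil b)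
      exact_mod_cast this
    have hcard : hlbfin.toFinset.card = K := by
      rw [← Set.ncard_eq_toFinset_card _ hlbfin, left_ball_eq hSsym hSgen,
        Set.ncard_image_of_injective _ (mul_right_injective (φ x))]
    calc (Tf.filter fun z => f z = x).card ≤ hlbfin.toFinset.card :=
          Finset.card_le_card hsub
      _ = K := hcard
  have himgB : Tf.image f ⊆ Bf := by
    intro x hx
    obtain ⟨z, hz, rfl⟩ := Finset.mem_image.mp hx
    rw [hBf, Set.Finite.mem_toFinset]
    exact hfB z (by rwa [hTf, Set.Finite.mem_toFinset] at hz)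
  have hfinal : Tf.card ≤ K * Bf.card :=
    le_trans hcount (Nat.mul_le_mul_left K (Finset.card_le_card himgB))
  have hTcard : T.ncard = Tf.card := Set.ncard_eq_toFinset_card T hTfin
  have hBcard : B.ncard = Bf.card := Set.ncard_eq_toFinset_card B hBfin
  rw [inv_mul_le_iff₀ hK0']
  have : (T.ncard : ℝ) ≤ (K : ℝ) * (B.ncard : ℝ) := by
    rw [hTcard, hBcard]
    exact_mod_cast hfinal
  exact this
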